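/- Given β₁, β₂ distinct points in the open unit disk and constants C₁, C₂ ∈ ℂ with C₁C₂ ≠ 0 and |C₂/C₁| determined so the problem is solvable, there is at most one γ in the open unit disk such that C₁ m_γ(β₁) = C₂ m_γ(β₂), where m_γ(z) = (γ − z)/(1 − conj(γ)z). -/

import Mathlib

open Complex Metric

/-- For fixed distinct `β₁, β₂` in the unit disk and nonzero constants `C₁, C₂`, there
is at most one `γ` in the unit disk with `C₁ m_γ(β₁) = C₂ m_γ(β₂)`. -/
theorem stmt_14 (β₁ β₂ : ℂ) (hβ₁ : β₁ ∈ ball (0 : ℂ) 1) (hβ₂ : β₂ ∈ ball (0 : ℂ) 1)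
    (hβ : β₁ ≠ β₂) (C₁ C₂ : ℂ) (hC₁ : C₁ ≠ 0) (hC₂ : C₂ ≠ 0)
    (mob : ℂ → ℂ → ℂ)
    (hmob : ∀ γ z : ℂ, mob γ z = (γ - z) / (1 - (starRingEnd ℂ) γ * z)) :
    ∀ γ ∈ ball (0 : ℂ) 1, ∀ γ' ∈ ball (0 : ℂ) 1,
      C₁ * mob γ β₁ = C₂ * mob γ β₂ →
      C₁ * mob γ' β₁ = C₂ * mob γ' β₂ → γ = γ' := by
  rw [mem_ball_zero_iff] at hβ₁ hβ₂
  intro γ hγ γ' hγ' h h'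
  rw [mem_ball_zero_iff] at hγ hγ'
  rw [hmob, hmob] at h
  rw [hmob, hmob] at h'
  have key : ∀ a b : ℂ, ‖a‖ < 1 → ‖b‖ < 1 → (1 : ℂ) - (starRingEnd ℂ) a * b ≠ 0 := by
    intro a b ha hb hz
    rw [sub_eq_zero] at hz
    have h1 : ‖(starRingEnd ℂ) a * b‖ < 1 := by
      rw [norm_mul, RCLike.norm_conj]
      nlinarith [norm_nonneg a, norm_nonneg b]
    rw [← hz] at h1
    simp at h1
  have E : C₁ * (γ - β₁) * (1 - (starRingEnd ℂ) γ * β₂)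
      = C₂ * (γ - β₂) * (1 - (starRingEnd ℂ) γ * β₁) := by
    rw [mul_div_assoc', mul_div_assoc', div_eq_div_iff (key γ β₁ hγ hβ₁) (key γ β₂ hγ hβ₂)] at h
    linear_combination h
  have E' : C₁ * (γ' - β₁) * (1 - (starRingEnd ℂ) γ' * β₂)
      = C₂ * (γ' - β₂) * (1 - (starRingEnd ℂ) γ' * β₁) := by
    rw [mul_div_assoc', mul_div_assoc', div_eq_div_iff (key γ' β₁ hγ' hβ₁) (key γ' β₂ hγ' hβ₂)] at h'
    linear_combination h'
  -- helper facts about norms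
  have hns : ∀ z : ℂ, normSq z = ‖z‖^2 := by
    intro z; rw [Complex.normSq_eq_norm_sq]
  have hone : ∀ z : ℂ, ‖z‖ < 1 → ‖(1:ℂ) - z * (starRingEnd ℂ) z‖ = 1 - ‖z‖^2 := by
    intro z hz
    rw [Complex.mul_conj, show ((1:ℂ) - ↑(normSq z)) = ((1 - ‖z‖^2 : ℝ) : ℂ) by rw [hns]; push_cast; ring,
      Complex.norm_real, Real.norm_eq_abs]
    exact abs_of_nonneg (by nlinarith [norm_nonneg z])
  by_cases hC : C₁ = C₂
  · -- then |γ| = 1, contradiction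
    exfalso
    subst hC
    have h0 : C₁ * (β₁ - β₂) * (γ * (starRingEnd ℂ) γ - 1) = 0 := by linear_combination E
    rcases mul_eq_zero.mp h0 with h1 | h1
    · rcases mul_eq_zero.mp h1 with h2 | h2
      · exact hC₁ h2
      · exact hβ (sub_eq_zero.mp h2)
    · rw [sub_eq_zero, Complex.mul_conj] at h1
      have : normSq γ = 1 := by exact_mod_cast h1
      rw [Complex.normSq_eq_norm_sq] at this
      nlinarith [norm_nonneg γ]
  · have ha : C₁ - C₂ ≠ 0 := sub_ne_zero.mpr hC
    have III : (β₁ + β₂ - γ - β₁*β₂*(starRingEnd ℂ) γ) * (1 - γ'*(starRingEnd ℂ) γ')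
        = (β₁ + β₂ - γ' - β₁*β₂*(starRingEnd ℂ) γ') * (1 - γ*(starRingEnd ℂ) γ) := by
      have h0 : (C₁ - C₂) * ((β₁ + β₂ - γ - β₁*β₂*(starRingEnd ℂ) γ) * (1 - γ'*(starRingEnd ℂ) γ')
          - (β₁ + β₂ - γ' - β₁*β₂*(starRingEnd ℂ) γ') * (1 - γ*(starRingEnd ℂ) γ)) = 0 := by
        linear_combination (1 - γ*(starRingEnd ℂ) γ) * E' - (1 - γ'*(starRingEnd ℂ) γ') * E
      exact sub_eq_zero.mp ((mul_eq_zero.mp h0).resolve_left ha)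
    have cIII := congrArg (starRingEnd ℂ) III
    simp only [map_mul, map_sub, map_add, map_one, Complex.conj_conj] at cIII
    have q1 : (β₁*β₂) * ((starRingEnd ℂ) β₁ * (starRingEnd ℂ) β₂) = ((normSq (β₁*β₂) : ℝ) : ℂ) := by
      have := Complex.mul_conj (β₁*β₂); rw [map_mul] at this; linear_combination this
    have q2 : (γ*γ') * ((starRingEnd ℂ) γ * (starRingEnd ℂ) γ') = ((normSq (γ*γ') : ℝ) : ℂ) := by
      have := Complex.mul_conj (γ*γ'); rw [map_mul] at this; linear_combination this
    have q3 : γ * (starRingEnd ℂ) γ = ((normSq γ : ℝ) : ℂ) := Complex.mul_conj γ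
    have q4 : γ' * (starRingEnd ℂ) γ' = ((normSq γ' : ℝ) : ℂ) := Complex.mul_conj γ'
    -- the key identity
    have V : (γ - γ') * ((1 - ((normSq (β₁*β₂) : ℝ) : ℂ)) * (1 - ((normSq (γ*γ') : ℝ) : ℂ)))
        = (((normSq γ : ℝ) : ℂ) - ((normSq γ' : ℝ) : ℂ)) *
          ((β₁*(1 - β₂*(starRingEnd ℂ) β₂) + β₂*(1 - β₁*(starRingEnd ℂ) β₁))
            - γ*γ'*((starRingEnd ℂ) β₁*(1 - β₂*(starRingEnd ℂ) β₂)
              + (starRingEnd ℂ) β₂*(1 - β₁*(starRingEnd ℂ) β₁))) := by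
      linear_combination (-(1 + (starRingEnd ℂ) β₁ * (starRingEnd ℂ) β₂ * γ * γ')) * III
        + (β₁*β₂ + γ*γ') * cIII
        + (γ - γ') * (1 - (γ*γ') * ((starRingEnd ℂ) γ * (starRingEnd ℂ) γ')) * q1
        + (γ - γ') * (1 - ((normSq (β₁*β₂) : ℝ) : ℂ)) * q2
        + ((β₁*(1 - β₂*(starRingEnd ℂ) β₂) + β₂*(1 - β₁*(starRingEnd ℂ) β₁))
            - γ*γ'*((starRingEnd ℂ) β₁*(1 - β₂*(starRingEnd ℂ) β₂)
              + (starRingEnd ℂ) β₂*(1 - β₁*(starRingEnd ℂ) β₁))) * q3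
        - ((β₁*(1 - β₂*(starRingEnd ℂ) β₂) + β₂*(1 - β₁*(starRingEnd ℂ) β₁))
            - γ*γ'*((starRingEnd ℂ) β₁*(1 - β₂*(starRingEnd ℂ) β₂)
              + (starRingEnd ℂ) β₂*(1 - β₁*(starRingEnd ℂ) β₁))) * q4
    have hA : normSq (β₁*β₂) < 1 := by
      rw [Complex.normSq_eq_norm_sq, norm_mul]
      nlinarith [norm_nonneg β₁, norm_nonneg β₂, mul_nonneg (norm_nonneg β₁) (norm_nonneg β₂),
        mul_lt_one_of_nonneg_of_lt_one_left (norm_nonneg β₁) hβ₁ (le_of_lt hβ₂)]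
    have hB : normSq (γ*γ') < 1 := by
      rw [Complex.normSq_eq_norm_sq, norm_mul]
      nlinarith [norm_nonneg γ, norm_nonneg γ', mul_nonneg (norm_nonneg γ) (norm_nonneg γ'),
        mul_lt_one_of_nonneg_of_lt_one_left (norm_nonneg γ) hγ (le_of_lt hγ')]
    by_cases hxy : normSq γ = normSq γ'
    · -- difference of norms vanishes; conclude γ = γ'
      have h0 : (γ - γ') * ((1 - ((normSq (β₁*β₂) : ℝ) : ℂ)) * (1 - ((normSq (γ*γ') : ℝ) : ℂ))) = 0 := by
        rw [V, hxy]; ring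
      have hA0 : (1 - ((normSq (β₁*β₂) : ℝ) : ℂ)) ≠ 0 := by
        rw [show (1 - ((normSq (β₁*β₂) : ℝ) : ℂ)) = ((1 - normSq (β₁*β₂) : ℝ) : ℂ) by push_cast; ring]
        exact_mod_cast (by linarith : (1:ℝ) - normSq (β₁*β₂) ≠ 0)
      have hB0 : (1 - ((normSq (γ*γ') : ℝ) : ℂ)) ≠ 0 := by
        rw [show (1 - ((normSq (γ*γ') : ℝ) : ℂ)) = ((1 - normSq (γ*γ') : ℝ) : ℂ) by push_cast; ring]
        exact_mod_cast (by linarith : (1:ℝ) - normSq (γ*γ') ≠ 0)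
      have := (mul_eq_zero.mp h0).resolve_right (mul_ne_zero hA0 hB0)
      exact sub_eq_zero.mp this
    · exfalso
      -- multiply by conj γ + conj γ' and take real parts
      have V2 : (((1 - normSq (β₁*β₂)) * (1 - normSq (γ*γ')) : ℝ) : ℂ) * ((γ - γ') * ((starRingEnd ℂ) γ + (starRingEnd ℂ) γ'))
          = (((normSq γ - normSq γ') : ℝ) : ℂ) *
            (((β₁*(1 - β₂*(starRingEnd ℂ) β₂) + β₂*(1 - β₁*(starRingEnd ℂ) β₁))
              - γ*γ'*((starRingEnd ℂ) β₁*(1 - β₂*(starRingEnd ℂ) β₂)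
                + (starRingEnd ℂ) β₂*(1 - β₁*(starRingEnd ℂ) β₁))) * ((starRingEnd ℂ) γ + (starRingEnd ℂ) γ')) := by
        push_cast
        linear_combination ((starRingEnd ℂ) γ + (starRingEnd ℂ) γ') * V
      have hre := congrArg Complex.re V2
      simp only [Complex.re_ofReal_mul] at hre
      have hre1 : ((γ - γ') * ((starRingEnd ℂ) γ + (starRingEnd ℂ) γ')).re = normSq γ - normSq γ' := by
        simp [Complex.mul_re, Complex.sub_re, Complex.add_re, Complex.sub_im, Complex.add_im,
          Complex.conj_re, Complex.conj_im, Complex.normSq_apply]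
        ring
      rw [hre1] at hre
      have ht : normSq γ - normSq γ' ≠ 0 := sub_ne_zero.mpr hxy
      have hD : (1 - normSq (β₁*β₂)) * (1 - normSq (γ*γ'))
          = (((β₁*(1 - β₂*(starRingEnd ℂ) β₂) + β₂*(1 - β₁*(starRingEnd ℂ) β₁))
              - γ*γ'*((starRingEnd ℂ) β₁*(1 - β₂*(starRingEnd ℂ) β₂)
                + (starRingEnd ℂ) β₂*(1 - β₁*(starRingEnd ℂ) β₁))) * ((starRingEnd ℂ) γ + (starRingEnd ℂ) γ')).re := by
        apply mul_right_cancel₀ ht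
        rw [mul_comm _ (normSq γ - normSq γ')] at hre ⊢
        linarith [hre]
      -- rewrite the real part as re(conj S * T)
      have hcc : ∀ z w : ℂ, z + (starRingEnd ℂ) z = w + (starRingEnd ℂ) w → z.re = w.re := by
        intro z w hzw
        have := congrArg Complex.re hzw
        simp [Complex.add_re, Complex.conj_re] at this
        linarith
      have hre2 : (((β₁*(1 - β₂*(starRingEnd ℂ) β₂) + β₂*(1 - β₁*(starRingEnd ℂ) β₁))
              - γ*γ'*((starRingEnd ℂ) β₁*(1 - β₂*(starRingEnd ℂ) β₂)
                + (starRingEnd ℂ) β₂*(1 - β₁*(starRingEnd ℂ) β₁))) * ((starRingEnd ℂ) γ + (starRingEnd ℂ) γ')).re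
          = (((starRingEnd ℂ) β₁*(1 - β₂*(starRingEnd ℂ) β₂) + (starRingEnd ℂ) β₂*(1 - β₁*(starRingEnd ℂ) β₁))
              * (γ*(1 - γ'*(starRingEnd ℂ) γ') + γ'*(1 - γ*(starRingEnd ℂ) γ))).re := by
        apply hcc
        simp only [map_mul, map_sub, map_add, map_one, Complex.conj_conj]
        ring
      rw [hre2] at hD
      -- now estimate
      set Sc := (starRingEnd ℂ) β₁*(1 - β₂*(starRingEnd ℂ) β₂) + (starRingEnd ℂ) β₂*(1 - β₁*(starRingEnd ℂ) β₁) with hSc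
      set T := γ*(1 - γ'*(starRingEnd ℂ) γ') + γ'*(1 - γ*(starRingEnd ℂ) γ) with hT
      have hS : ‖Sc‖ ≤ ‖β₁‖*(1-‖β₂‖^2) + ‖β₂‖*(1-‖β₁‖^2) := by
        calc ‖Sc‖ ≤ ‖(starRingEnd ℂ) β₁*(1 - β₂*(starRingEnd ℂ) β₂)‖ + ‖(starRingEnd ℂ) β₂*(1 - β₁*(starRingEnd ℂ) β₁)‖ := norm_add_le _ _
        _ = ‖β₁‖*(1-‖β₂‖^2) + ‖β₂‖*(1-‖β₁‖^2) := by
            rw [norm_mul, norm_mul, RCLike.norm_conj, RCLike.norm_conj, hone β₂ hβ₂, hone β₁ hβ₁]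
      have hTn : ‖T‖ ≤ ‖γ‖*(1-‖γ'‖^2) + ‖γ'‖*(1-‖γ‖^2) := by
        calc ‖T‖ ≤ ‖γ*(1 - γ'*(starRingEnd ℂ) γ')‖ + ‖γ'*(1 - γ*(starRingEnd ℂ) γ)‖ := norm_add_le _ _
        _ = ‖γ‖*(1-‖γ'‖^2) + ‖γ'‖*(1-‖γ‖^2) := by
            rw [norm_mul, norm_mul, hone γ' hγ', hone γ hγ]
      have hle : (Sc * T).re ≤ ‖Sc‖ * ‖T‖ := by
        calc (Sc * T).re ≤ ‖Sc * T‖ := Complex.re_le_norm _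
        _ = ‖Sc * T‖ := rfl
        _ = ‖Sc‖ * ‖T‖ := norm_mul _ _
      rw [Complex.normSq_eq_norm_sq, norm_mul] at hA hD
      rw [Complex.normSq_eq_norm_sq, norm_mul] at hB hD
      set m := ‖β₁‖; set n := ‖β₂‖; set a := ‖γ‖; set b := ‖γ'‖
      have hm0 : 0 ≤ m := norm_nonneg _
      have hn0 : 0 ≤ n := norm_nonneg _
      have ha0 : 0 ≤ a := norm_nonneg _
      have hb0 : 0 ≤ b := norm_nonneg _
      have hS0 : 0 ≤ ‖Sc‖ := norm_nonneg _
      have hT0 : 0 ≤ ‖T‖ := norm_nonneg _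
      have hm2 : m^2 < 1 := pow_lt_one₀ hm0 hβ₁ two_ne_zero
      have hn2 : n^2 < 1 := pow_lt_one₀ hn0 hβ₂ two_ne_zero
      have ha2 : a^2 < 1 := pow_lt_one₀ ha0 hγ two_ne_zero
      have hb2 : b^2 < 1 := pow_lt_one₀ hb0 hγ' two_ne_zero
      have hkey : (1 - (m*n)^2) * (1 - (a*b)^2) ≤ (m*(1-n^2) + n*(1-m^2)) * (a*(1-b^2) + b*(1-a^2)) := by
        calc (1 - (m*n)^2) * (1 - (a*b)^2) = (Sc * T).re := hD
        _ ≤ ‖Sc‖ * ‖T‖ := hle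
        _ ≤ (m*(1-n^2) + n*(1-m^2)) * (a*(1-b^2) + b*(1-a^2)) := by
            exact mul_le_mul hS hTn hT0
              (add_nonneg (mul_nonneg hm0 (by linarith)) (mul_nonneg hn0 (by linarith)))
      have hmn1 : m*n < 1 := mul_lt_one_of_nonneg_of_lt_one_left hm0 hβ₁ (le_of_lt hβ₂)
      have hab1 : a*b < 1 := mul_lt_one_of_nonneg_of_lt_one_left ha0 hγ (le_of_lt hγ')
      have K1 : (0:ℝ) < (1-m)*(1-n)*(1-m*n) :=
        mul_pos (mul_pos (by linarith) (by linarith)) (by linarith)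
      have K2 : (0:ℝ) < (1-a)*(1-b)*(1-a*b) :=
        mul_pos (mul_pos (by linarith) (by linarith)) (by linarith)
      have Q1 : (0:ℝ) < 1-(m*n)^2 := by
        have := pow_lt_one₀ (mul_nonneg hm0 hn0) hmn1 (two_ne_zero)
        linarith
      have E2 : (0:ℝ) ≤ a*(1-b^2) + b*(1-a^2) :=
        add_nonneg (mul_nonneg ha0 (by linarith)) (mul_nonneg hb0 (by linarith))
      have expand : (m*(1-n^2)+n*(1-m^2)) * (a*(1-b^2)+b*(1-a^2))
          = (1-(m*n)^2)*(1-(a*b)^2)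
            - (1-m)*(1-n)*(1-m*n)*(a*(1-b^2)+b*(1-a^2))
            - (1-(m*n)^2)*((1-a)*(1-b)*(1-a*b)) := by ring
      rw [expand] at hkey
      have t1 : (0:ℝ) ≤ (1-m)*(1-n)*(1-m*n)*(a*(1-b^2)+b*(1-a^2)) := mul_nonneg K1.le E2
      have t2 : (0:ℝ) < (1-(m*n)^2)*((1-a)*(1-b)*(1-a*b)) := mul_pos Q1 K2
      linarith
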